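/- There exists a differentiable function y : ℝ → ℝ satisfying y'(t) = −cos(y(t)) + t·sin(y(t)) for all t ≥ 0 such that y(t) ∈ (0, π) for all t ≥ 0. (This is the case a = −1 of the system ẋ = 1, ẏ = a·cos y + x·sin y: although on the boundary of the strip 0 ≤ y ≤ π the vector field points strictly outward — ẏ < 0 on y = 0 and ẏ > 0 on y = π — the Ważewski method yields a solution that never leaves the strip.) -/

import Mathlib

open Real Set Filter Topology
open scoped NNReal

noncomputable section Wazewski

/-- The vector field of the ODE. -/
def vf (t y : ℝ) : ℝ := -Real.cos y + t * Real.sin y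



/-- The vector field of the ODE. -/
lemma hasDerivAt_vf (t y : ℝ) :
    HasDerivAt (vf t) (Real.sin y + t * Real.cos y) y := by
  have h1 : HasDerivAt (fun z => -Real.cos z) (Real.sin y) y := by
    have := (Real.hasDerivAt_cos y).neg; simp only [neg_neg] at this; exact this
  have h2 : HasDerivAt (fun z => t * Real.sin z) (t * Real.cos y) y :=
    (Real.hasDerivAt_sin y).const_mul t
  exact h1.add h2

lemma abs_vf_le (t y : ℝ) : |vf t y| ≤ 1 + |t| := by
  have h1 := abs_cos_le_one y
  have h2 := abs_sin_le_one y
  calc |vf t y| ≤ |(-Real.cos y)| + |t * Real.sin y| := abs_add_le _ _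
    _ ≤ 1 + |t| := by
        rw [abs_neg, abs_mul]
        have : |t| * |Real.sin y| ≤ |t| * 1 := by
          exact mul_le_mul_of_nonneg_left h2 (abs_nonneg t)
        nlinarith [abs_nonneg t]

lemma lipschitzWith_vf (t : ℝ) {K : ℝ≥0} (hK : 1 + |t| ≤ (K : ℝ)) :
    LipschitzWith K (vf t) := by
  apply lipschitzWith_of_nnnorm_deriv_le
  · exact fun y => (hasDerivAt_vf t y).differentiableAt
  · intro y
    rw [← NNReal.coe_le_coe, coe_nnnorm]
    have : deriv (vf t) y = Real.sin y + t * Real.cos y := (hasDerivAt_vf t y).deriv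
    rw [this, Real.norm_eq_abs]
    calc |Real.sin y + t * Real.cos y| ≤ |Real.sin y| + |t * Real.cos y| := abs_add_le _ _
      _ ≤ 1 + |t| := by
          rw [abs_mul]
          have h2 := abs_cos_le_one y
          have := mul_le_mul_of_nonneg_left h2 (abs_nonneg t)
          nlinarith [abs_sin_le_one y]
      _ ≤ K := hK


/-- Existence of a local solution on `Ioo (-T) T` with value `c` at `0`. -/
lemma exists_sol (c T : ℝ) (hT : 0 < T) :
    ∃ f : ℝ → ℝ, f 0 = c ∧ ∀ t ∈ Ioo (-T) T, HasDerivAt f (vf t (f t)) t := by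
  have hTK : (0:ℝ) ≤ 1 + T := by linarith
  have hpl : IsPicardLindelof vf (tmin := -T) (tmax := T) ⟨0, by constructor <;> linarith⟩ c (⟨1 + T, hTK⟩ * ⟨T, hT.le⟩) 0 ⟨1 + T, hTK⟩ ⟨1 + T, hTK⟩ := by
    constructor
    · intro t ht
      apply (lipschitzWith_vf t ?_).lipschitzOnWith
      · show 1 + |t| ≤ 1 + T
        have : |t| ≤ T := abs_le.mpr ⟨ht.1, ht.2⟩
        linarith
    · intro x _
      exact (Continuous.continuousOn (by continuity))
    · intro t ht x _
      rw [Real.norm_eq_abs]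
      have h1 := abs_vf_le t x
      have : |t| ≤ T := abs_le.mpr ⟨ht.1, ht.2⟩
      show |vf t x| ≤ 1 + T
      linarith
    · show (1 + T) * max (T - 0) (0 - -T) ≤ (1 + T) * T - 0
      have : max (T - 0) (0 - -T) = T := by
        simp
      rw [this]
      simp
  obtain ⟨f, hf0, hf⟩ := hpl.exists_eq_forall_mem_Icc_hasDerivWithinAt₀
  refine ⟨f, hf0, fun t ht => ?_⟩
  exact (hf t (Ioo_subset_Icc_self ht)).hasDerivAt (Icc_mem_nhds ht.1 ht.2)


/-- Uniqueness of solutions on `Ioo (-T) T`. -/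
lemma sol_unique {f g : ℝ → ℝ} {T : ℝ} (hT : 0 < T)
    (hf : ∀ t ∈ Ioo (-T) T, HasDerivAt f (vf t (f t)) t)
    (hg : ∀ t ∈ Ioo (-T) T, HasDerivAt g (vf t (g t)) t)
    (h0 : f 0 = g 0) : EqOn f g (Ioo (-T) T) := by
  have hTK : (0:ℝ) ≤ 1 + T := by linarith
  set s : ℝ → Set ℝ := fun t => if t ∈ Ioo (-T) T then univ else (∅ : Set ℝ) with hs
  have hv : ∀ t, LipschitzOnWith ⟨1 + T, hTK⟩ (vf t) (s t) := by
    intro t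
    by_cases ht : t ∈ Ioo (-T) T
    · rw [hs]; simp only [ht, if_pos]
      apply (lipschitzWith_vf t ?_).lipschitzOnWith
      show 1 + |t| ≤ 1 + T
      have : |t| ≤ T := le_of_lt (abs_lt.mpr ⟨ht.1, ht.2⟩)
      linarith
    · rw [hs]; simp only [ht, if_neg, if_false]
      exact lipschitzOnWith_empty _ _
  have hmem : ∀ (h : ℝ → ℝ), ∀ t ∈ Ioo (-T) T, h t ∈ s t := by
    intro h t ht; rw [hs]; simp [ht]
  exact ODE_solution_unique_of_mem_Ioo (fun t _ => hv t) (by constructor <;> [linarith; exact hT])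
    (fun t ht => ⟨hf t ht, hmem f t ht⟩) (fun t ht => ⟨hg t ht, hmem g t ht⟩) h0

/-- The chosen solution on `Ioo (-(|T|+1)) (|T|+1)`. -/
def presol (c T : ℝ) : ℝ → ℝ := Classical.choose (exists_sol c (|T| + 1) (by positivity))

lemma presol_zero (c T : ℝ) : presol c T 0 = c :=
  (Classical.choose_spec (exists_sol c (|T| + 1) (by positivity))).1

lemma presol_deriv (c T : ℝ) : ∀ t ∈ Ioo (-(|T|+1)) (|T|+1),
    HasDerivAt (presol c T) (vf t (presol c T t)) t :=
  (Classical.choose_spec (exists_sol c (|T| + 1) (by positivity))).2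

lemma presol_eq (c : ℝ) {T T' : ℝ} (h : |T| ≤ |T'|) :
    EqOn (presol c T) (presol c T') (Ioo (-(|T|+1)) (|T|+1)) := by
  apply sol_unique (by positivity) (presol_deriv c T)
  · intro t ht
    apply presol_deriv c T'
    exact ⟨by linarith [ht.1], by linarith [ht.2]⟩
  · rw [presol_zero, presol_zero]

/-- The global solution with `Y c 0 = c`. -/
def Y (c : ℝ) : ℝ → ℝ := fun t => presol c t t

lemma Y_zero (c : ℝ) : Y c 0 = c := by
  simp only [Y]; exact presol_zero c 0

lemma Y_hasDerivAt (c t : ℝ) : HasDerivAt (Y c) (vf t (Y c t)) t := by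
  have key : ∀ s : ℝ, |s| ≤ |t| + 1 → Y c s = presol c (|t|+1) s := by
    intro s hs
    have h1 : |s| ≤ |(|t|+1)| := by
      rw [abs_of_nonneg (show (0:ℝ) ≤ |t|+1 by positivity)]; exact hs
    have hmem : s ∈ Ioo (-(|s|+1)) (|s|+1) :=
      ⟨by linarith [neg_abs_le s], by linarith [le_abs_self s]⟩
    exact presol_eq c h1 hmem
  have hU : ∀ᶠ s in 𝓝 t, Y c s = presol c (|t|+1) s := by
    have hmem : {s : ℝ | |s| < |t| + 1} ∈ 𝓝 t := by
      apply IsOpen.mem_nhds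
      · have he : {s : ℝ | |s| < |t| + 1} = Ioo (-(|t|+1)) (|t|+1) := by
          ext s; simp [abs_lt]
        rw [he]; exact isOpen_Ioo
      · simp only [mem_setOf_eq]; linarith [abs_nonneg t]
    filter_upwards [hmem] with s hs
    exact key s (le_of_lt hs)
  have hd : HasDerivAt (presol c (|t|+1)) (vf t (presol c (|t|+1) t)) t := by
    apply presol_deriv
    have habs : |(|t|+1)| = |t|+1 := abs_of_nonneg (by positivity)
    rw [habs]
    exact ⟨by linarith [neg_abs_le t], by linarith [le_abs_self t]⟩
  have hYt : Y c t = presol c (|t|+1) t := key t (by linarith)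
  rw [hYt]
  exact hd.congr_of_eventuallyEq hU



lemma Y_cont (c : ℝ) : Continuous (Y c) :=
  continuous_iff_continuousAt.mpr fun t => (Y_hasDerivAt c t).differentiableAt.continuousAt

/-- Grönwall: continuity in the initial condition. -/
lemma Y_dist {t₀ : ℝ} (ht₀ : 0 ≤ t₀) (c c' : ℝ) :
    dist (Y c t₀) (Y c' t₀) ≤ dist c c' * Real.exp ((1 + t₀) * t₀) := by
  have hTK : (0:ℝ) ≤ 1 + t₀ := by linarith
  set s : ℝ → Set ℝ := fun t => if t ∈ Icc 0 t₀ then univ else (∅ : Set ℝ) with hs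
  have hv : ∀ t, LipschitzOnWith ⟨1 + t₀, hTK⟩ (vf t) (s t) := by
    intro t
    by_cases ht : t ∈ Icc 0 t₀
    · rw [hs]; simp only [ht, if_pos]
      apply (lipschitzWith_vf t ?_).lipschitzOnWith
      show 1 + |t| ≤ 1 + t₀
      have : |t| ≤ t₀ := abs_le.mpr ⟨by linarith [ht.1], ht.2⟩
      linarith
    · rw [hs]; simp only [ht, if_neg, if_false]
      exact lipschitzOnWith_empty _ _
  have hmem : ∀ c'' : ℝ, ∀ t ∈ Ico 0 t₀, Y c'' t ∈ s t := by
    intro c'' t ht; rw [hs]; simp [Ico_subset_Icc_self ht]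
  have := dist_le_of_trajectories_ODE_of_mem (fun t _ => hv t)
    ((Y_cont c).continuousOn)
    (fun t _ => (Y_hasDerivAt c t).hasDerivWithinAt)
    (hmem c)
    ((Y_cont c').continuousOn)
    (fun t _ => (Y_hasDerivAt c' t).hasDerivWithinAt)
    (hmem c')
    (le_of_eq (by rw [Y_zero, Y_zero]))
    t₀ ⟨ht₀, le_refl _⟩
  simp only [sub_zero] at this
  exact this

lemma Y_continuous_in_c {t₀ : ℝ} (ht₀ : 0 ≤ t₀) : Continuous fun c => Y c t₀ := by
  apply LipschitzWith.continuous (K := (Real.exp ((1 + t₀) * t₀)).toNNReal)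
  apply LipschitzWith.of_dist_le_mul
  intro c c'
  rw [Real.coe_toNNReal _ (Real.exp_nonneg _)]
  calc dist (Y c t₀) (Y c' t₀) ≤ dist c c' * Real.exp ((1 + t₀) * t₀) := Y_dist ht₀ c c'
    _ = Real.exp ((1 + t₀) * t₀) * dist c c' := mul_comm _ _

/-- If the derivative is negative, values just to the left are larger. -/
lemma eventually_left_gt {g : ℝ → ℝ} {t₀ d : ℝ} (h : HasDerivAt g d t₀) (hd : d < 0) :
    ∀ᶠ s in 𝓝[<] t₀, g t₀ < g s := by
  have hs := hasDerivAt_iff_tendsto_slope.mp h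
  have h2 : Tendsto (slope g t₀) (𝓝[<] t₀) (𝓝 d) :=
    hs.mono_left (nhdsWithin_mono _ (fun x hx => ne_of_lt hx))
  have h3 : ∀ᶠ s in 𝓝[<] t₀, slope g t₀ s < 0 := h2.eventually (eventually_lt_nhds hd)
  filter_upwards [h3, self_mem_nhdsWithin] with s h4 h5
  rw [slope_def_field] at h4
  have h6 : s - t₀ < 0 := sub_neg.mpr h5
  rcases div_neg_iff.mp h4 with ⟨h7, _⟩ | ⟨_, h8⟩
  · linarith
  · linarith

/-- If the derivative is negative, values just to the right are smaller. -/
lemma eventually_right_lt {g : ℝ → ℝ} {t₀ d : ℝ} (h : HasDerivAt g d t₀) (hd : d < 0) :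
    ∀ᶠ s in 𝓝[>] t₀, g s < g t₀ := by
  have hs := hasDerivAt_iff_tendsto_slope.mp h
  have h2 : Tendsto (slope g t₀) (𝓝[>] t₀) (𝓝 d) :=
    hs.mono_left (nhdsWithin_mono _ (fun x hx => ne_of_gt hx))
  have h3 : ∀ᶠ s in 𝓝[>] t₀, slope g t₀ s < 0 := h2.eventually (eventually_lt_nhds hd)
  filter_upwards [h3, self_mem_nhdsWithin] with s h4 h5
  rw [slope_def_field] at h4
  have h6 : (0:ℝ) < s - t₀ := sub_pos.mpr h5
  rcases div_neg_iff.mp h4 with ⟨_, h7⟩ | ⟨h8, _⟩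
  · linarith
  · linarith

lemma eventually_left_lt {g : ℝ → ℝ} {t₀ d : ℝ} (h : HasDerivAt g d t₀) (hd : 0 < d) :
    ∀ᶠ s in 𝓝[<] t₀, g s < g t₀ := by
  have := eventually_left_gt h.neg (by linarith : -d < 0)
  filter_upwards [this] with s hs
  simpa using hs

lemma eventually_right_gt {g : ℝ → ℝ} {t₀ d : ℝ} (h : HasDerivAt g d t₀) (hd : 0 < d) :
    ∀ᶠ s in 𝓝[>] t₀, g t₀ < g s := by
  have := eventually_right_lt h.neg (by linarith : -d < 0)
  filter_upwards [this] with s hs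
  simpa using hs

/-- Once the solution is below 0, it stays below 0 (at `y = 0` the field is `-1 < 0`). -/
lemma stays_below {g : ℝ → ℝ} (hg : ∀ t, HasDerivAt g (vf t (g t)) t) {t₁ : ℝ}
    (h1 : g t₁ < 0) : ∀ t, t₁ ≤ t → g t < 0 := by
  intro t₂ ht
  by_contra hcon
  push_neg at hcon
  have hcont : Continuous g :=
    continuous_iff_continuousAt.mpr fun t => (hg t).differentiableAt.continuousAt
  have hlt : t₁ < t₂ := lt_of_le_of_ne ht (by rintro rfl; linarith)
  set S := {t | t ∈ Icc t₁ t₂ ∧ g t = 0} with hS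
  have hSclosed : IsClosed S := by
    have : S = Icc t₁ t₂ ∩ g ⁻¹' {0} := by ext t; simp [hS, and_comm]
    rw [this]
    exact isClosed_Icc.inter (isClosed_singleton.preimage hcont)
  have hbdd : BddBelow S := ⟨t₁, fun t htS => htS.1.1⟩
  have hSne : S.Nonempty := by
    have h0 : (0:ℝ) ∈ Icc (g t₁) (g t₂) := ⟨h1.le, hcon⟩
    obtain ⟨t₄, ht₄, hgt₄⟩ := intermediate_value_Icc hlt.le hcont.continuousOn h0
    exact ⟨t₄, ht₄, hgt₄⟩
  set t₃ := sInf S with ht₃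
  have hmem := hSclosed.csInf_mem hSne hbdd
  have hg3 : g t₃ = 0 := hmem.2
  have ht13 : t₁ < t₃ := lt_of_le_of_ne hmem.1.1 (by intro he; rw [← he] at hg3; linarith)
  have hneg : ∀ s, s ∈ Ico t₁ t₃ → g s < 0 := by
    intro s hs
    by_contra hcon2
    push_neg at hcon2
    have h0 : (0:ℝ) ∈ Icc (g t₁) (g s) := ⟨h1.le, hcon2⟩
    obtain ⟨t₄, ht₄, hgt₄⟩ := intermediate_value_Icc hs.1 hcont.continuousOn h0
    have ht₄S : t₄ ∈ S :=
      ⟨⟨ht₄.1, le_trans ht₄.2 (le_trans hs.2.le hmem.1.2)⟩, hgt₄⟩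
    have := csInf_le hbdd ht₄S
    have : t₄ < t₃ := lt_of_le_of_lt ht₄.2 hs.2
    linarith [csInf_le hbdd ht₄S]
  have hd : HasDerivAt g (-1) t₃ := by
    have := hg t₃
    rw [hg3] at this
    simpa [vf] using this
  have hev := eventually_left_gt hd (by norm_num)
  have hev2 : ∀ᶠ s in 𝓝[<] t₃, t₁ < s :=
    ((eventually_gt_nhds ht13).filter_mono nhdsWithin_le_nhds)
  obtain ⟨s, hs1, hs2, hs3⟩ := (hev.and (hev2.and self_mem_nhdsWithin)).exists
  rw [hg3] at hs1
  exact absurd (hneg s ⟨hs2.le, hs3⟩) (by linarith)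

/-- Once the solution is above π, it stays above π (at `y = π` the field is `1 > 0`). -/
lemma stays_above {g : ℝ → ℝ} (hg : ∀ t, HasDerivAt g (vf t (g t)) t) {t₁ : ℝ}
    (h1 : Real.pi < g t₁) : ∀ t, t₁ ≤ t → Real.pi < g t := by
  intro t₂ ht
  by_contra hcon
  push_neg at hcon
  have hcont : Continuous g :=
    continuous_iff_continuousAt.mpr fun t => (hg t).differentiableAt.continuousAt
  have hlt : t₁ < t₂ := lt_of_le_of_ne ht (by rintro rfl; linarith)
  set S := {t | t ∈ Icc t₁ t₂ ∧ g t = Real.pi} with hS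
  have hSclosed : IsClosed S := by
    have : S = Icc t₁ t₂ ∩ g ⁻¹' {Real.pi} := by ext t; simp [hS, and_comm]
    rw [this]
    exact isClosed_Icc.inter (isClosed_singleton.preimage hcont)
  have hbdd : BddBelow S := ⟨t₁, fun t htS => htS.1.1⟩
  have hSne : S.Nonempty := by
    have h0 : Real.pi ∈ Icc (g t₂) (g t₁) := ⟨hcon, h1.le⟩
    obtain ⟨t₄, ht₄, hgt₄⟩ := intermediate_value_Icc' hlt.le hcont.continuousOn h0
    exact ⟨t₄, ht₄, hgt₄⟩
  set t₃ := sInf S with ht₃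
  have hmem := hSclosed.csInf_mem hSne hbdd
  have hg3 : g t₃ = Real.pi := hmem.2
  have ht13 : t₁ < t₃ := lt_of_le_of_ne hmem.1.1 (by intro he; rw [← he] at hg3; linarith)
  have hpos : ∀ s, s ∈ Ico t₁ t₃ → Real.pi < g s := by
    intro s hs
    by_contra hcon2
    push_neg at hcon2
    have h0 : Real.pi ∈ Icc (g s) (g t₁) := ⟨hcon2, h1.le⟩
    obtain ⟨t₄, ht₄, hgt₄⟩ := intermediate_value_Icc' hs.1 hcont.continuousOn h0
    have ht₄S : t₄ ∈ S :=
      ⟨⟨ht₄.1, le_trans ht₄.2 (le_trans hs.2.le hmem.1.2)⟩, hgt₄⟩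
    have : t₄ < t₃ := lt_of_le_of_lt ht₄.2 hs.2
    linarith [csInf_le hbdd ht₄S]
  have hd : HasDerivAt g 1 t₃ := by
    have := hg t₃
    rw [hg3] at this
    simpa [vf] using this
  have hev := eventually_left_lt hd (by norm_num)
  have hev2 : ∀ᶠ s in 𝓝[<] t₃, t₁ < s :=
    ((eventually_gt_nhds ht13).filter_mono nhdsWithin_le_nhds)
  obtain ⟨s, hs1, hs2, hs3⟩ := (hev.and (hev2.and self_mem_nhdsWithin)).exists
  rw [hg3] at hs1
  exact absurd (hpos s ⟨hs2.le, hs3⟩) (by linarith)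


end Wazewski

/-- The case `a = -1` of the system `ẋ = 1`, `ẏ = a cos y + x sin y` (with `x(0) = 0`,
so `x(t) = t`): although the vector field points strictly outward on the boundary of
the strip `0 ≤ y ≤ π`, the Ważewski method yields a solution of
`y' = -cos y + t·sin y` that remains in the open strip `(0, π)` for all `t ≥ 0`. -/
theorem exists_solution_staying_in_strip :
    ∃ y : ℝ → ℝ, Differentiable ℝ y ∧
      (∀ t ≥ (0 : ℝ), deriv y t = -Real.cos (y t) + t * Real.sin (y t)) ∧
      ∀ t ≥ (0 : ℝ), y t ∈ Set.Ioo 0 Real.pi := by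
  classical
  set A : Set ℝ := {c | ∃ t, 0 ≤ t ∧ Y c t < 0} with hA
  set B : Set ℝ := {c | ∃ t, 0 ≤ t ∧ Real.pi < Y c t} with hB
  have hAopen : IsOpen A := by
    have he : A = ⋃ t : {t : ℝ // 0 ≤ t}, (fun c => Y c t.1) ⁻¹' Iio 0 := by
      ext c
      simp only [hA, mem_setOf_eq, mem_iUnion, mem_preimage, mem_Iio, Subtype.exists,
        exists_prop]
    rw [he]
    exact isOpen_iUnion fun t => (Y_continuous_in_c t.2).isOpen_preimage _ isOpen_Iio
  have hBopen : IsOpen B := by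
    have he : B = ⋃ t : {t : ℝ // 0 ≤ t}, (fun c => Y c t.1) ⁻¹' Ioi Real.pi := by
      ext c
      simp only [hB, mem_setOf_eq, mem_iUnion, mem_preimage, mem_Ioi, Subtype.exists,
        exists_prop]
    rw [he]
    exact isOpen_iUnion fun t => (Y_continuous_in_c t.2).isOpen_preimage _ isOpen_Ioi
  have hdisj : ∀ c, ¬(c ∈ A ∧ c ∈ B) := by
    rintro c ⟨⟨t1, ht1, h1⟩, ⟨t2, ht2, h2⟩⟩
    have hYd := Y_hasDerivAt c
    rcases le_total t1 t2 with h | h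
    · have := stays_below hYd h1 t2 h
      linarith [Real.pi_pos]
    · have := stays_above hYd h2 t1 h
      linarith [Real.pi_pos]
  have h0A : (0:ℝ) ∈ A := by
    have hd : HasDerivAt (Y 0) (-1) 0 := by
      have h := Y_hasDerivAt 0 0
      rw [Y_zero] at h
      simpa [vf] using h
    have hev := eventually_right_lt hd (by norm_num)
    obtain ⟨s, hs1, hs2⟩ := (hev.and self_mem_nhdsWithin).exists
    rw [Y_zero] at hs1
    exact ⟨s, le_of_lt hs2, hs1⟩
  have hπB : Real.pi ∈ B := by
    have hd : HasDerivAt (Y Real.pi) 1 0 := by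
      have h := Y_hasDerivAt Real.pi 0
      rw [Y_zero] at h
      simpa [vf] using h
    have hev := eventually_right_gt hd (by norm_num)
    obtain ⟨s, hs1, hs2⟩ := (hev.and self_mem_nhdsWithin).exists
    rw [Y_zero] at hs1
    exact ⟨s, le_of_lt hs2, hs1⟩
  have key : ∃ c ∈ Icc (0:ℝ) Real.pi, c ∉ A ∧ c ∉ B := by
    by_contra hcon
    push_neg at hcon
    have hsub : Icc (0:ℝ) Real.pi ⊆ A ∪ B := by
      intro c hc
      by_cases h : c ∈ A
      · exact Or.inl h
      · exact Or.inr (hcon c hc h)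
    have hne := isPreconnected_Icc (a := (0:ℝ)) (b := Real.pi) A B hAopen hBopen hsub
      ⟨0, ⟨le_refl _, Real.pi_pos.le⟩, h0A⟩
      ⟨Real.pi, ⟨Real.pi_pos.le, le_refl _⟩, hπB⟩
    obtain ⟨c, _, hc2⟩ := hne
    exact hdisj c hc2
  obtain ⟨c, _, hcA, hcB⟩ := key
  have hnonneg : ∀ t, 0 ≤ t → 0 ≤ Y c t := fun t ht =>
    le_of_not_gt fun h => hcA ⟨t, ht, h⟩
  have hlepi : ∀ t, 0 ≤ t → Y c t ≤ Real.pi := fun t ht =>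
    le_of_not_gt fun h => hcB ⟨t, ht, h⟩
  have hstrict : ∀ t, 0 ≤ t → Y c t ∈ Ioo 0 Real.pi := by
    intro t ht
    constructor
    · rcases eq_or_lt_of_le (hnonneg t ht) with h | h
      · exfalso
        have hd : HasDerivAt (Y c) (-1) t := by
          have hh := Y_hasDerivAt c t
          rw [← h] at hh
          simpa [vf] using hh
        have hev := eventually_right_lt hd (by norm_num)
        obtain ⟨s, hs1, hs2⟩ := (hev.and self_mem_nhdsWithin).exists
        rw [← h] at hs1
        exact hcA ⟨s, le_trans ht (le_of_lt hs2), hs1⟩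
      · exact h
    · rcases eq_or_lt_of_le (hlepi t ht) with h | h
      · exfalso
        have hd : HasDerivAt (Y c) 1 t := by
          have hh := Y_hasDerivAt c t
          rw [h] at hh
          simpa [vf] using hh
        have hev := eventually_right_gt hd (by norm_num)
        obtain ⟨s, hs1, hs2⟩ := (hev.and self_mem_nhdsWithin).exists
        rw [h] at hs1
        exact hcB ⟨s, le_trans ht (le_of_lt hs2), hs1⟩
      · exact h
  refine ⟨Y c, fun t => (Y_hasDerivAt c t).differentiableAt, fun t ht => ?_, fun t ht => hstrict t ht⟩
  rw [(Y_hasDerivAt c t).deriv]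
  rfl
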